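/- arXiv:1603.05116 — 2 statements merged into one kernel-verified Lean document; each statement's English description precedes it below -/
import Mathlib

section
/- Let G be a finite simple graph and let e be an edge of G. Then the Grundy domination number of the graph G - e obtained by deleting the edge e satisfies γ_gr(G - e) ≤ γ_gr(G) + 1. -/
/-- The closed neighborhood `N[v] = {v} ∪ N(v)` of a vertex. -/
def closedNbhd {V : Type*} (G : SimpleGraph V) (v : V) : Set V :=
  insert v (G.neighborSet v)

/-- A sequence (list) of pairwise distinct vertices is legal if each vertex
footprints some vertex not dominated by the previous ones. -/
def IsLegalSeq {V : Type*} (G : SimpleGraph V) (l : List V) : Prop :=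
  l.Nodup ∧ ∀ i : Fin l.length, ∃ u,
    u ∈ closedNbhd G (l.get i) ∧
    ∀ j : Fin l.length, (j : ℕ) < (i : ℕ) → u ∉ closedNbhd G (l.get j)

/-- A legal dominating sequence. -/
def IsDomSeq {V : Type*} (G : SimpleGraph V) (l : List V) : Prop :=
  IsLegalSeq G l ∧ ∀ u : V, ∃ v ∈ l, u ∈ closedNbhd G v

/-- The Grundy domination number: the maximum length of a legal dominating sequence. -/
noncomputable def grundyDomNum {V : Type*} (G : SimpleGraph V) : ℕ :=
  sSup {k : ℕ | ∃ l : List V, IsDomSeq G l ∧ l.length = k}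

lemma mem_closedNbhd {V : Type*} (G : SimpleGraph V) (v u : V) :
    u ∈ closedNbhd G v ↔ u = v ∨ G.Adj v u := by
  simp [closedNbhd, Set.mem_insert_iff]

lemma self_mem_closedNbhd {V : Type*} (G : SimpleGraph V) (v : V) :
    v ∈ closedNbhd G v := (mem_closedNbhd G v v).mpr (Or.inl rfl)

lemma closedNbhd_deleteEdges_subset {V : Type*} (G : SimpleGraph V) (s : Set (Sym2 V)) (v : V) :
    closedNbhd (G.deleteEdges s) v ⊆ closedNbhd G v := by
  intro u hu
  rw [mem_closedNbhd] at hu ⊢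
  rcases hu with h | h
  · exact Or.inl h
  · exact Or.inr ((SimpleGraph.deleteEdges_adj).mp h).1

lemma closedNbhd_diff {V : Type*} (G : SimpleGraph V) (x y v u : V)
    (h1 : u ∈ closedNbhd G v)
    (h2 : u ∉ closedNbhd (G.deleteEdges {s(x, y)}) v) :
    (v = x ∧ u = y) ∨ (v = y ∧ u = x) := by
  rw [mem_closedNbhd] at h1 h2
  push_neg at h2
  rcases h1 with rfl | hadj
  · exact absurd rfl h2.1
  · have hne := h2.2
    rw [SimpleGraph.deleteEdges_adj] at hne
    have : s(v, u) ∈ ({s(x, y)} : Set (Sym2 V)) := by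
      by_contra hmem
      exact hne ⟨hadj, hmem⟩
    rw [Set.mem_singleton_iff, Sym2.eq_iff] at this
    exact this

lemma perm_eraseIdx_append {α : Type*} (l : List α) (i : ℕ) (h : i < l.length) :
    l.Perm (l.eraseIdx i ++ [l[i]]) := by
  rw [List.eraseIdx_eq_take_drop_succ, List.append_assoc]
  conv_lhs => rw [← List.take_append_drop i l, List.drop_eq_getElem_cons h]
  exact List.Perm.append_left _ (List.perm_append_singleton _ _).symm

/-- Generic construction: if all steps of `l` except possibly step `i` are legal in `G`
(with footprints `u`), and `l` dominates `G`, then there is a legal dominating sequence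
of `G` of length at least `l.length - 1`. -/
lemma build {V : Type*} (G : SimpleGraph V) (l : List V) (hnd : l.Nodup)
    (i : Fin l.length) (u : Fin l.length → V)
    (hu1 : ∀ m : Fin l.length, u m ∈ closedNbhd G (l.get m))
    (hleg : ∀ m m' : Fin l.length, (m' : ℕ) < (m : ℕ) → m ≠ i → u m ∉ closedNbhd G (l.get m'))
    (hdom : ∀ w : V, ∃ v ∈ l, w ∈ closedNbhd G v) :
    ∃ l' : List V, IsDomSeq G l' ∧ l.length ≤ l'.length + 1 := by
  classical
  have hlen : (l.eraseIdx i).length = l.length - 1 := by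
    rw [List.length_eraseIdx, if_pos i.isLt]
  have hψ : ∀ m : Fin (l.eraseIdx i).length, ∃ p : Fin l.length,
      (l.eraseIdx i).get m = l.get p ∧
      (((p : ℕ) = (m : ℕ) ∧ (m : ℕ) < (i : ℕ)) ∨
        ((p : ℕ) = (m : ℕ) + 1 ∧ (i : ℕ) ≤ (m : ℕ))) := by
    intro m
    have hm := m.isLt
    rw [List.get_eq_getElem, List.getElem_eraseIdx]
    split
    · next h =>
      exact ⟨⟨(m : ℕ), by omega⟩, by rw [List.get_eq_getElem], Or.inl ⟨rfl, h⟩⟩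
    · next h =>
      refine ⟨⟨(m : ℕ) + 1, by omega⟩, by rw [List.get_eq_getElem], Or.inr ⟨rfl, by omega⟩⟩
  choose ψ hψ1 hψ2 using hψ
  have hψne : ∀ m, ψ m ≠ i := by
    intro m hc
    have := hψ2 m
    rw [hc] at this
    omega
  have hψmono : ∀ m m' : Fin (l.eraseIdx i).length, (m' : ℕ) < (m : ℕ) →
      (ψ m' : ℕ) < (ψ m : ℕ) := by
    intro m m' h
    have h1 := hψ2 m
    have h2 := hψ2 m'
    omega
  -- the common legality of all steps of l.eraseIdx i
  have legE : ∀ m m' : Fin (l.eraseIdx i).length, (m' : ℕ) < (m : ℕ) →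
      u (ψ m) ∉ closedNbhd G ((l.eraseIdx i).get m') := by
    intro m m' h
    rw [hψ1 m']
    exact hleg (ψ m) (ψ m') (hψmono m m' h) (hψne m)
  have memE : ∀ m : Fin (l.eraseIdx i).length, u (ψ m) ∈ closedNbhd G ((l.eraseIdx i).get m) := by
    intro m
    rw [hψ1 m]
    exact hu1 (ψ m)
  have hndE : (l.eraseIdx i).Nodup := (List.eraseIdx_sublist l i).nodup hnd
  have hperm : l.Perm (l.eraseIdx i ++ [l.get i]) := by
    have := perm_eraseIdx_append l i i.isLt
    simpa [List.get_eq_getElem] using this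
  by_cases hc : ∃ z, z ∈ closedNbhd G (l.get i) ∧ ∀ w ∈ l.eraseIdx i, z ∉ closedNbhd G w
  · -- move vertex i to the end
    obtain ⟨z, hz1, hz2⟩ := hc
    refine ⟨l.eraseIdx i ++ [l.get i], ⟨⟨hperm.nodup hnd, ?_⟩, ?_⟩, ?_⟩
    · intro m
      have hm : (m : ℕ) < (l.eraseIdx (i : ℕ)).length + 1 := by
        simpa using m.isLt
      by_cases hml : (m : ℕ) < (l.eraseIdx i).length
      · refine ⟨u (ψ ⟨(m : ℕ), hml⟩), ?_, ?_⟩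
        · have : (l.eraseIdx i ++ [l.get i]).get m = (l.eraseIdx i).get ⟨(m : ℕ), hml⟩ := by
            simp only [List.get_eq_getElem]
            exact List.getElem_append_left hml
          rw [this]
          exact memE _
        · intro j hj
          have hjl : (j : ℕ) < (l.eraseIdx i).length := lt_trans hj hml
          have : (l.eraseIdx i ++ [l.get i]).get j = (l.eraseIdx i).get ⟨(j : ℕ), hjl⟩ := by
            simp only [List.get_eq_getElem]
            exact List.getElem_append_left hjl
          rw [this]
          exact legE _ _ hj
      · have hmv : (m : ℕ) = (l.eraseIdx i).length := by omega
        refine ⟨z, ?_, ?_⟩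
        · have : (l.eraseIdx i ++ [l.get i]).get m = l.get i := by
            simp only [List.get_eq_getElem]
            rw [List.getElem_append_right (le_of_eq hmv.symm)]
            simp [hmv]
          rw [this]
          exact hz1
        · intro j hj
          have hjl : (j : ℕ) < (l.eraseIdx i).length := by omega
          have : (l.eraseIdx i ++ [l.get i]).get j = (l.eraseIdx i).get ⟨(j : ℕ), hjl⟩ := by
            simp only [List.get_eq_getElem]
            exact List.getElem_append_left hjl
          rw [this]
          exact hz2 _ (List.get_mem _ _)
    · intro w
      obtain ⟨v, hv, hw⟩ := hdom w
      exact ⟨v, hperm.mem_iff.mp hv, hw⟩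
    · rw [List.length_append, List.length_singleton]
      omega
  · -- drop vertex i
    push_neg at hc
    refine ⟨l.eraseIdx i, ⟨⟨hndE, ?_⟩, ?_⟩, ?_⟩
    · intro m
      exact ⟨u (ψ m), memE m, fun j hj => legE m j hj⟩
    · intro w
      obtain ⟨v, hv, hw⟩ := hdom w
      rw [hperm.mem_iff, List.mem_append, List.mem_singleton] at hv
      rcases hv with hv | rfl
      · exact ⟨v, hv, hw⟩
      · obtain ⟨w', hw'mem, hw'in⟩ := hc w hw
        exact ⟨w', hw'mem, hw'in⟩
    · have := i.isLt
      omega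

lemma key2 {V : Type*} (G G' : SimpleGraph V) (x y : V)
    (hsub : ∀ v : V, closedNbhd G' v ⊆ closedNbhd G v)
    (hdiff : ∀ v w : V, w ∈ closedNbhd G v → w ∉ closedNbhd G' v →
      (v = x ∧ w = y) ∨ (v = y ∧ w = x))
    (l : List V) (hnd : l.Nodup)
    (hdom : ∀ w : V, ∃ v ∈ l, w ∈ closedNbhd G' v)
    (u : Fin l.length → V)
    (hu1 : ∀ m : Fin l.length, u m ∈ closedNbhd G' (l.get m))
    (hu2 : ∀ m m' : Fin l.length, (m' : ℕ) < (m : ℕ) → u m ∉ closedNbhd G' (l.get m'))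
    (i j0 : Fin l.length) (hji : (j0 : ℕ) < (i : ℕ)) (hux : u i = x) (hvy : l.get j0 = y) :
    ∃ l' : List V, IsDomSeq G l' ∧ l.length ≤ l'.length + 1 := by
  classical
  -- no "y-bad" step
  have noybad : ∀ m q : Fin l.length, (q : ℕ) < (m : ℕ) → u m = y → l.get q ≠ x := by
    intro m q hqm humy hqx
    rcases lt_or_ge (q : ℕ) (i : ℕ) with h | h
    · have := hu2 i q h
      rw [hux, hqx] at this
      exact this (self_mem_closedNbhd G' x)
    · have hj0m : (j0 : ℕ) < (m : ℕ) := lt_of_lt_of_le hji (le_trans h (le_of_lt hqm))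
      have := hu2 m j0 hj0m
      rw [humy, hvy] at this
      exact this (self_mem_closedNbhd G' y)
  have hdist : ∀ m : Fin l.length, m ≠ i → u m ≠ x := by
    intro m hmi hmx
    rcases lt_trichotomy (m : ℕ) (i : ℕ) with h | h | h
    · have := hu2 i m h
      rw [hux] at this
      exact this (hmx ▸ hu1 m)
    · exact hmi (Fin.ext h)
    · have := hu2 m i h
      rw [hmx, ← hux] at this
      exact this (hu1 i)
  have claimC : ∀ m m' : Fin l.length, (m' : ℕ) < (m : ℕ) → m ≠ i →
      u m ∉ closedNbhd G (l.get m') := by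
    intro m m' hlt hmi hmem
    rcases hdiff _ _ hmem (hu2 m m' hlt) with ⟨hv, hu⟩ | ⟨hv, hu⟩
    · exact noybad m m' hlt hu hv
    · exact hdist m hmi hu
  exact build G l hnd i u (fun m => hsub _ (hu1 m)) claimC
    (fun w => (hdom w).elim fun v hv => ⟨v, hv.1, hsub _ hv.2⟩)

lemma key {V : Type*} (G : SimpleGraph V) (x y : V)
    (l : List V) (h : IsDomSeq (G.deleteEdges {s(x, y)}) l) :
    ∃ l' : List V, IsDomSeq G l' ∧ l.length ≤ l'.length + 1 := by
  classical
  obtain ⟨⟨hnd, hleg⟩, hdom⟩ := h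
  choose u hu1 hu2 using hleg
  have hsub : ∀ v : V, closedNbhd (G.deleteEdges {s(x, y)}) v ⊆ closedNbhd G v :=
    fun v => closedNbhd_deleteEdges_subset G _ v
  have hdiff : ∀ v w : V, w ∈ closedNbhd G v → w ∉ closedNbhd (G.deleteEdges {s(x, y)}) v →
      (v = x ∧ w = y) ∨ (v = y ∧ w = x) :=
    fun v w h1 h2 => closedNbhd_diff G x y v w h1 h2
  by_cases hbad : ∃ m m' : Fin l.length, (m' : ℕ) < (m : ℕ) ∧ u m ∈ closedNbhd G (l.get m')
  · obtain ⟨m, m', hlt, hmem⟩ := hbad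
    rcases hdiff _ _ hmem (hu2 m m' hlt) with ⟨hv, hu⟩ | ⟨hv, hu⟩
    · exact key2 G _ y x hsub
        (fun v w h1 h2 => (hdiff v w h1 h2).symm)
        l hnd hdom u hu1 hu2 m m' hlt hu hv
    · exact key2 G _ x y hsub hdiff l hnd hdom u hu1 hu2 m m' hlt hu hv
  · push_neg at hbad
    refine ⟨l, ⟨⟨hnd, fun m => ⟨u m, hsub _ (hu1 m), fun j hj => hbad m j hj⟩⟩, ?_⟩, by omega⟩
    intro w
    obtain ⟨v, hv, hw⟩ := hdom w
    exact ⟨v, hv, hsub _ hw⟩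

theorem grundy_edge_deletion_upper {V : Type*} [Fintype V] (G : SimpleGraph V)
    (e : Sym2 V) (he : e ∈ G.edgeSet) :
    grundyDomNum (G.deleteEdges {e}) ≤ grundyDomNum G + 1 := by
  classical
  induction e using Sym2.ind with
  | _ x y =>
    unfold grundyDomNum
    apply csSup_le'
    rintro k ⟨l, hdom, rfl⟩
    obtain ⟨l', hdom', hlen⟩ := key G x y l hdom
    have hmem : l'.length ∈ {k : ℕ | ∃ l : List V, IsDomSeq G l ∧ l.length = k} :=
      ⟨l', hdom', rfl⟩
    have hbdd : BddAbove {k : ℕ | ∃ l : List V, IsDomSeq G l ∧ l.length = k} := by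
      refine ⟨Fintype.card V, ?_⟩
      rintro k ⟨l, ⟨⟨hnd, _⟩, _⟩, rfl⟩
      exact hnd.length_le_card
    have := le_csSup hbdd hmem
    omega
end

section
/- Let G be a finite simple graph and let u be a vertex of G. Then the Grundy domination number of the graph G - u obtained by deleting u (the induced subgraph on V(G) \ {u}) satisfies γ_gr(G - u) ≤ γ_gr(G). -/
lemma mem_closedNbhd_induce {V : Type*} (G : SimpleGraph V) (S : Set V)
    (x w : S) : w ∈ closedNbhd (G.induce S) x ↔ (w : V) ∈ closedNbhd G (x : V) := by
  simp [closedNbhd, SimpleGraph.neighborSet, Subtype.ext_iff]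

lemma bddAbove_grundySet {V : Type*} [Fintype V] (G : SimpleGraph V) :
    BddAbove {k : ℕ | ∃ l : List V, IsDomSeq G l ∧ l.length = k} := by
  refine ⟨Fintype.card V, ?_⟩
  rintro k ⟨l, ⟨⟨hnd, _⟩, _⟩, rfl⟩
  exact hnd.length_le_card

theorem grundy_vertex_deletion_upper {V : Type*} [Fintype V] (G : SimpleGraph V)
    (u : V) :
    grundyDomNum (G.induce {v : V | v ≠ u}) ≤ grundyDomNum G := by
  apply csSup_le'
  rintro k ⟨l, ⟨⟨hnd, hleg⟩, hdom⟩, rfl⟩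
  set l' : List V := l.map Subtype.val with hl'
  have hlen : l'.length = l.length := l.length_map _
  have hne : ∀ v ∈ l', v ≠ u := by
    intro v hv
    rw [hl', List.mem_map] at hv
    obtain ⟨w, _, rfl⟩ := hv
    exact w.2
  have hnd' : l'.Nodup := hnd.map Subtype.val_injective
  have hgetl : ∀ i : Fin l'.length, l'.get i = (l.get (Fin.cast hlen i) : V) := by
    intro i
    simp only [hl', List.get_eq_getElem, List.getElem_map, Fin.coe_cast]
  have hleg' : IsLegalSeq G l' := by
    refine ⟨hnd', fun i => ?_⟩
    obtain ⟨w, hw1, hw2⟩ := hleg (Fin.cast hlen i)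
    refine ⟨(w : V), ?_, ?_⟩
    · rw [hgetl i]
      exact (mem_closedNbhd_induce G _ _ _).mp hw1
    · intro j hj hmem
      refine hw2 (Fin.cast hlen j) hj ?_
      rw [mem_closedNbhd_induce]
      rwa [hgetl j] at hmem
  have hdom' : ∀ x : V, x ≠ u → ∃ v ∈ l', x ∈ closedNbhd G v := by
    intro x hx
    obtain ⟨v, hv, hmem⟩ := hdom ⟨x, hx⟩
    exact ⟨(v : V), List.mem_map_of_mem (f := Subtype.val) hv, (mem_closedNbhd_induce G _ _ _).mp hmem⟩
  by_cases hu : ∃ v ∈ l', u ∈ closedNbhd G v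
  · have hd : IsDomSeq G l' := by
      refine ⟨hleg', fun x => ?_⟩
      by_cases hx : x = u
      · subst hx; exact hu
      · exact hdom' x hx
    calc l.length = l'.length := hlen.symm
      _ ≤ _ := le_csSup (bddAbove_grundySet G) ⟨l', hd, rfl⟩
  · push_neg at hu
    have hunotmem : u ∉ l' := fun h => hne u h rfl
    have hd : IsDomSeq G (l' ++ [u]) := by
      constructor
      · constructor
        · simpa [List.nodup_append] using ⟨hnd', hne⟩
        · intro i
          rcases lt_or_eq_of_le (Nat.lt_succ_iff.mp (by simpa using i.2)) with hi | hi
          · obtain ⟨w, hw1, hw2⟩ := hleg'.2 ⟨i, hi⟩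
            refine ⟨w, ?_, ?_⟩
            · have : (l' ++ [u]).get i = l'.get ⟨i, hi⟩ := by
                simp [List.get_eq_getElem, List.getElem_append_left hi]
              rw [this]; exact hw1
            · intro j hj hmem
              have hj' : (j : ℕ) < l'.length := lt_trans hj hi
              have : (l' ++ [u]).get j = l'.get ⟨j, hj'⟩ := by
                simp [List.get_eq_getElem, List.getElem_append_left hj']
              rw [this] at hmem
              exact hw2 ⟨j, hj'⟩ hj hmem
          · refine ⟨u, ?_, ?_⟩
            · have : (l' ++ [u]).get i = u := by
                simp [List.get_eq_getElem, hi.symm, List.getElem_append_right (le_refl l'.length)]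
              rw [this]; exact Set.mem_insert _ _
            · intro j hj hmem
              have hj' : (j : ℕ) < l'.length := by omega
              have : (l' ++ [u]).get j = l'.get ⟨j, hj'⟩ := by
                simp [List.get_eq_getElem, List.getElem_append_left hj']
              rw [this] at hmem
              exact hu _ (List.get_mem l' ⟨j, hj'⟩) hmem
      · intro x
        by_cases hx : x = u
        · refine ⟨u, by simp, ?_⟩
          rw [hx]; exact Set.mem_insert _ _
        · obtain ⟨v, hv, hmem⟩ := hdom' x hx
          exact ⟨v, by simp [hv], hmem⟩
    calc l.length = l'.length := hlen.symm
      _ ≤ (l' ++ [u]).length := by simp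
      _ ≤ _ := le_csSup (bddAbove_grundySet G) ⟨l' ++ [u], hd, rfl⟩
end
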